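/- Let 𝒜 be a nonempty finite alphabet and let ω be a Toeplitz sequence over 𝒜 with EP(ω) = {2^k : k ≥ 1}. Then: (a) the shift σ maps Z(ω,σ) onto Z(ω,σ), i.e. every x ∈ Z(ω,σ) has at least one preimage in Z(ω,σ) under σ; (b) there exists a unique ω* ∈ Z(ω,σ) whose preimage {η ∈ Z(ω,σ) : ση = ω*} contains more than one element; (c) a sequence x ∈ Z(ω,σ) is not a Toeplitz sequence if and only if σ^n x = ω* for some n ≥ 1. -/

import Mathlib

/-- The one-sided shift on sequences.  Sequences are 0-indexed here: index `n`
stands for position `n+1` of the paper's sequences `{1,2,3,…} → 𝒜`. -/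
def shift {𝒜 : Type*} (x : ℕ → 𝒜) : ℕ → 𝒜 := fun n => x (n + 1)

/-- `Z(ω,σ)`: the closure of the forward shift-orbit of `ω`. -/
def orbitClosure {𝒜 : Type*} [TopologicalSpace 𝒜] (ω : ℕ → 𝒜) : Set (ℕ → 𝒜) :=
  closure {y | ∃ n : ℕ, shift^[n] ω = y}

/-- A sequence is Toeplitz if every position is periodically repeated. -/
def IsToeplitz {𝒜 : Type*} (x : ℕ → 𝒜) : Prop :=
  ∀ n : ℕ, ∃ p : ℕ, 0 < p ∧ ∀ k : ℕ, 0 < k → x (n + k * p) = x n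

/-- `p ≥ 1` is an essential partial period of `x` if there is a position `m` with
`x(m+kp) = x(m)` for all `k ≥ 1`, while for every `1 ≤ p' < p` some `k ≥ 1` has
`x(m+kp') ≠ x(m)`. -/
def EP {𝒜 : Type*} (x : ℕ → 𝒜) : Set ℕ :=
  {p | 0 < p ∧ ∃ m : ℕ, (∀ k : ℕ, 0 < k → x (m + k * p) = x m) ∧
    ∀ p' : ℕ, 0 < p' → p' < p → ∃ k : ℕ, 0 < k ∧ x (m + k * p') ≠ x m}

namespace T6

lemma tpp (k : ℕ) : 0 < 2^k := Nat.pow_pos (by norm_num)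

lemma shift_iter {𝒜 : Type*} : ∀ (t : ℕ) (x : ℕ → 𝒜) (n : ℕ), shift^[t] x n = x (n + t) := by
  intro t
  induction t with
  | zero => intro x n; simp
  | succ t ih =>
      intro x n
      rw [Function.iterate_succ_apply]
      rw [ih (shift x) n]
      show x (n + t + 1) = x (n + (t+1))
      ring_nf

lemma mem_orbitClosure_iff {𝒜 : Type*} [TopologicalSpace 𝒜] [DiscreteTopology 𝒜]
    (ω x : ℕ → 𝒜) :
    x ∈ orbitClosure ω ↔ ∀ L : ℕ, ∃ t : ℕ, ∀ i, i < L → ω (i + t) = x i := by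
  constructor
  · intro hx L
    have hopen : IsOpen {z : ℕ → 𝒜 | ∀ i, i < L → z i = x i} := by
      have : {z : ℕ → 𝒜 | ∀ i, i < L → z i = x i}
          = ⋂ i ∈ Finset.range L, (fun z : ℕ → 𝒜 => z i) ⁻¹' {x i} := by
        ext z; simp [Finset.mem_range]
      rw [this]
      exact isOpen_biInter_finset (fun i _ => (continuous_apply i).isOpen_preimage _ (isOpen_discrete _))
    rcases mem_closure_iff.mp hx _ hopen (fun i _ => rfl) with ⟨y, hy1, t, ht⟩
    subst ht
    exact ⟨t, fun i hi => by rw [← shift_iter t ω i]; exact (hy1 i hi)⟩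
  · intro h
    rw [orbitClosure, mem_closure_iff]
    intro o ho hxo
    rcases isOpen_pi_iff.mp ho x hxo with ⟨I, u, hu, hsub⟩
    rcases h ((I.sup id) + 1) with ⟨t, ht⟩
    refine ⟨shift^[t] ω, hsub fun i hi => ?_, t, rfl⟩
    rw [shift_iter, ht i (Nat.lt_succ_of_le (Finset.le_sup (f := id) hi))]
    exact (hu i hi).2

-- modular helpers
lemma addmul (a j M : ℕ) : a + j * M ≡ a [MOD M] := by
  show (a + j * M) % M = a % M
  rw [Nat.add_mul_mod_self_right]

lemma chain {c : ℕ → ℕ} (hc : ∀ k, c (k+1) ≡ c k [MOD 2^k]) :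
    ∀ {j k : ℕ}, j ≤ k → c k ≡ c j [MOD 2^j] := by
  intro j k hjk
  induction k with
  | zero => have : j = 0 := Nat.le_zero.mp hjk; subst this; rfl
  | succ k ih =>
      rcases Nat.lt_or_ge j (k+1) with h | h
      · have hj : j ≤ k := Nat.lt_succ_iff.mp h
        exact (((hc k).of_dvd (pow_dvd_pow 2 hj)).trans (ih hj))
      · have : j = k+1 := le_antisymm hjk h
        subst this; rfl

lemma cong_chain {c : ℕ → ℕ} (hc : ∀ k, c (k+1) ≡ c k [MOD 2^k])
    {n j k : ℕ} (h : n ≡ c k [MOD 2^k]) (hjk : j ≤ k) : n ≡ c j [MOD 2^j] :=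
  (h.of_dvd (pow_dvd_pow 2 hjk)).trans (chain hc hjk)

lemma class2 (k a : ℕ) : a % 2^(k+1) = a % 2^k ∨ a % 2^(k+1) = a % 2^k + 2^k := by
  have h1 : a % 2^(k+1) % 2^k = a % 2^k := Nat.mod_mod_of_dvd a (pow_dvd_pow 2 (Nat.le_succ k))
  have h2 : a % 2^(k+1) < 2^(k+1) := Nat.mod_lt _ (tpp _)
  obtain ⟨q, hq⟩ : ∃ q, a % 2^(k+1) / 2^k = q := ⟨_, rfl⟩
  have h3 := Nat.div_add_mod (a % 2^(k+1)) (2^k)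
  rw [h1, hq] at h3
  have h4 : a % 2^k < 2^k := Nat.mod_lt _ (tpp _)
  have h5 : (2:ℕ)^(k+1) = 2^k + 2^k := by rw [pow_succ]; omega
  have h6 : q ≤ 1 := by
    by_contra hkq
    push_neg at hkq
    have : 2^k * 2 ≤ 2^k * q := Nat.mul_le_mul_left _ hkq
    omega
  rcases Nat.le_one_iff_eq_zero_or_eq_one.mp h6 with h | h
  · rw [h, Nat.mul_zero] at h3; omega
  · rw [h, Nat.mul_one] at h3; omega

lemma coh_cases {c : ℕ → ℕ} (hlt : ∀ k, c k < 2^k) (hc : ∀ k, c (k+1) ≡ c k [MOD 2^k])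
    (k : ℕ) : c (k+1) = c k ∨ c (k+1) = c k + 2^k := by
  have h := hc k
  have h0 : c (k+1) % 2^k = c k := by
    have : c k % 2^k = c k := Nat.mod_eq_of_lt (hlt k)
    rw [← this]; exact h
  have h1 : c (k+1) % 2^(k+1) = c (k+1) := Nat.mod_eq_of_lt (hlt (k+1))
  have := class2 k (c (k+1))
  omega

def sib (c : ℕ → ℕ) (k : ℕ) : ℕ := if c (k+1) = c k then c k + 2^k else c k

lemma sib_spec {c : ℕ → ℕ} (hlt : ∀ k, c k < 2^k) (hc : ∀ k, c (k+1) ≡ c k [MOD 2^k]) (k : ℕ) :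
    sib c k < 2^(k+1) ∧ (sib c k ≡ c k [MOD 2^k]) ∧ ¬(sib c k ≡ c (k+1) [MOD 2^(k+1)]) ∧
      ∀ n, n ≡ c k [MOD 2^k] → ¬(n ≡ c (k+1) [MOD 2^(k+1)]) → n ≡ sib c k [MOD 2^(k+1)] := by
  have hp : (2:ℕ)^(k+1) = 2^k + 2^k := by rw [pow_succ]; omega
  have hk := hlt k
  have hk1 := hlt (k+1)
  have hcas := coh_cases hlt hc k
  have hsb : (sib c k = c k + 2^k ∧ c (k+1) = c k) ∨ (sib c k = c k ∧ c (k+1) = c k + 2^k) := by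
    rcases hcas with h | h
    · left; exact ⟨by rw [sib, if_pos h], h⟩
    · right
      exact ⟨by rw [sib, if_neg (show ¬ c (k+1) = c k by omega)], h⟩
  have hbound : sib c k < 2^(k+1) := by rcases hsb with ⟨h, _⟩ | ⟨h, _⟩ <;> omega
  refine ⟨hbound, ?_, ?_, ?_⟩
  · rcases hsb with ⟨h, _⟩ | ⟨h, _⟩
    · rw [h]; have := addmul (c k) 1 (2^k); simpa using this
    · rw [h]
  · intro hcon
    have : sib c k = c (k+1) := hcon.eq_of_lt_of_lt hbound hk1
    rcases hsb with ⟨h, h'⟩ | ⟨h, h'⟩ <;> omega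
  · intro n hn hnn
    have hrn : n % 2^k = c k % 2^k := hn
    have hck : c k % 2^k = c k := Nat.mod_eq_of_lt hk
    have hcls := class2 k n
    have hn1 : ¬ (n % 2^(k+1) = c (k+1)) := by
      intro hcon
      apply hnn
      show n % 2^(k+1) = c (k+1) % 2^(k+1)
      rw [hcon, Nat.mod_eq_of_lt hk1]
    show n % 2^(k+1) = sib c k % 2^(k+1)
    rw [Nat.mod_eq_of_lt hbound]
    rcases hsb with ⟨h, h'⟩ | ⟨h, h'⟩ <;> omega

lemma exists_depth {c : ℕ → ℕ} {n : ℕ} (h : ∃ k, ¬ n ≡ c k [MOD 2^k]) :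
    ∃ e, (n ≡ c e [MOD 2^e]) ∧ ¬(n ≡ c (e+1) [MOD 2^(e+1)]) := by
  classical
  have h0 : n ≡ c 0 [MOD 2^0] := by
    show n % 2^0 = c 0 % 2^0
    simp [Nat.mod_one]
  have hf := Nat.find_spec h
  have hfpos : Nat.find h ≠ 0 := by
    intro hcon
    rw [hcon] at hf
    exact hf h0
  obtain ⟨e, he⟩ := Nat.exists_eq_succ_of_ne_zero hfpos
  rw [he] at hf
  refine ⟨e, ?_, hf⟩
  by_contra hcon
  exact Nat.find_min h (by omega : e < Nat.find h) hcon

lemma mkt_spec (w s M : ℕ) (hM : 0 < M) :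
    ((w + M - s % M) % M) + s ≡ w [MOD M] := by
  set v := (w + M - s % M) % M with hv
  have h1 : v ≡ w + M - s % M [MOD M] := Nat.mod_modEq _ _
  have h2 : s % M ≡ s [MOD M] := Nat.mod_modEq _ _
  have h3 : v + s % M ≡ (w + M - s % M) + s % M [MOD M] := Nat.ModEq.add h1 (Nat.ModEq.refl _)
  have h4 : (w + M - s % M) + s % M = w + M := by
    have := Nat.mod_lt s hM
    omega
  calc v + s ≡ v + s % M [MOD M] := Nat.ModEq.add_left _ h2.symm
    _ ≡ w + M [MOD M] := by rw [← h4]; exact h3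
    _ ≡ w [MOD M] := by have := addmul w 1 M; simpa using this

lemma mkt_lt (w s M : ℕ) (hM : 0 < M) : (w + M - s % M) % M < M := Nat.mod_lt _ hM

-- transfer along t with t + c k ≡ r k
lemma shiftiff {t ck rk M : ℕ} (h : t + ck ≡ rk [MOD M]) (i : ℕ) :
    (i + t ≡ rk [MOD M]) ↔ (i ≡ ck [MOD M]) := by
  constructor
  · intro hi
    have : t + i ≡ t + ck [MOD M] := by
      have : i + t ≡ t + ck [MOD M] := hi.trans h.symm
      simpa [Nat.add_comm] using this
    exact Nat.ModEq.add_left_cancel' t this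
  · intro hi
    calc i + t ≡ ck + t [MOD M] := Nat.ModEq.add_right t hi
      _ = t + ck := Nat.add_comm _ _
      _ ≡ rk [MOD M] := h

lemma depth_unique {c : ℕ → ℕ} (hcc : ∀ k, c (k+1) ≡ c k [MOD 2^k]) {n e e' : ℕ}
    (h1 : n ≡ c e [MOD 2^e]) (h2 : ¬ n ≡ c (e+1) [MOD 2^(e+1)])
    (h1' : n ≡ c e' [MOD 2^e']) (h2' : ¬ n ≡ c (e'+1) [MOD 2^(e'+1)]) : e = e' := by
  rcases lt_trichotomy e e' with h | h | h
  · exact absurd (cong_chain hcc h1' (by omega : e + 1 ≤ e')) h2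
  · exact h
  · exact absurd (cong_chain hcc h1 (by omega : e' + 1 ≤ e)) h2'

def Coh (c : ℕ → ℕ) : Prop := (∀ k, c k < 2^k) ∧ ∀ k, c (k+1) ≡ c k [MOD 2^k]

def ModelW {𝒜 : Type*} (b : ℕ → 𝒜) (c : ℕ → ℕ) (x : ℕ → 𝒜) : Prop :=
  (∀ n k, n ≡ c k [MOD 2^k] → ¬(n ≡ c (k+1) [MOD 2^(k+1)]) → x n = b k) ∧
  (∀ n k, n ≡ c k [MOD 2^k] → ∃ t, k ≤ t ∧ x n = b t)

lemma structure_thm {𝒜 : Type*} (ω : ℕ → 𝒜) (hT : IsToeplitz ω)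
    (hEP : EP ω = {p : ℕ | ∃ k : ℕ, 1 ≤ k ∧ p = 2 ^ k}) :
    ∃ (r : ℕ → ℕ) (b : ℕ → 𝒜), Coh r ∧ ModelW b r ω ∧ (∀ d, ∃ t, d < t ∧ b t ≠ b d) := by
  classical
  set P : ℕ → ℕ → Prop := fun q n => ∀ j, 0 < j → ω (n + j * q) = ω n with hPdef
  have Pmono : ∀ k k' n, k ≤ k' → P (2^k) n → P (2^k') n := by
    intro k k' n hkk hp j hj
    have h2 : (2:ℕ)^k' = 2^(k'-k) * 2^k := by rw [← pow_add]; congr 1; omega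
    have := hp (j * 2^(k'-k)) (by positivity)
    rw [← this]
    congr 1
    rw [h2]; ring
  have eqcls : ∀ q a cpos, 0 < q → P q a → a ≡ cpos [MOD q] → a ≤ cpos → ω cpos = ω a := by
    intro q a cpos hq hp hm hle
    obtain ⟨j, hj⟩ := (Nat.modEq_iff_dvd' hle).mp hm
    have hj' : cpos = a + j * q := by
      have hcm : q * j = j * q := Nat.mul_comm _ _
      omega
    rcases Nat.eq_zero_or_pos j with h | h
    · rw [hj', h, Nat.zero_mul, Nat.add_zero]
    · rw [hj']
      exact hp j h
  have hmin : ∀ n, ∃ k, 1 ≤ k ∧ P (2^k) n ∧ ∀ p', 0 < p' → p' < 2^k → ¬ P p' n := by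
    intro n
    have hex : ∃ p, 0 < p ∧ P p n := hT n
    have hpm := Nat.find_spec hex
    have hEPmem : Nat.find hex ∈ EP ω := by
      refine ⟨hpm.1, n, hpm.2, ?_⟩
      intro p' h1 h2
      have hmin' := Nat.find_min hex h2
      push_neg at hmin'
      have h3 : ¬ ∀ j, 0 < j → ω (n + j * p') = ω n := hmin' h1
      push_neg at h3
      obtain ⟨j, hj1, hj2⟩ := h3
      exact ⟨j, hj1, hj2⟩
    rw [hEP] at hEPmem
    obtain ⟨k, hk1, hk2⟩ := hEPmem
    refine ⟨k, hk1, ?_, ?_⟩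
    · rw [← hk2]; exact hpm.2
    · intro p' h1 h2 hp'
      exact Nat.find_min hex (by omega) ⟨h1, hp'⟩
  have hEPelt : ∀ k, ∃ m, P (2^(k+1)) m ∧ ¬ P (2^k) m := by
    intro k
    have hmem : (2:ℕ)^(k+1) ∈ EP ω := by
      rw [hEP]; exact ⟨k+1, by omega, rfl⟩
    obtain ⟨-, m, hper, hfail⟩ := hmem
    have hlt : (2:ℕ)^k < 2^(k+1) := by
      have := tpp k; rw [pow_succ]; omega
    obtain ⟨j, hj, hne⟩ := hfail (2^k) (tpp k) hlt
    exact ⟨m, hper, fun h => hne (h j hj)⟩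
  have hval0 : ∀ k n₁, P (2^k) n₁ → ∀ m, m ≡ n₁ [MOD 2^k] → ω m = ω n₁ := by
    intro k n₁ h₁ m hm
    obtain ⟨k', -, hk'P, -⟩ := hmin m
    rcases le_or_gt k' k with hle | hlt
    · have hm' : P (2^k) m := Pmono k' k m hle hk'P
      rcases Nat.le_total m n₁ with h | h
      · exact (eqcls (2^k) m n₁ (tpp k) hm' hm h).symm
      · exact eqcls (2^k) n₁ m (tpp k) h₁ hm.symm h
    · have h1 : ω (m + (n₁ + 1) * 2^k') = ω m := hk'P (n₁+1) (by omega)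
      have hd : (2:ℕ)^k' = 2^(k'-k) * 2^k := by rw [← pow_add]; congr 1; omega
      have h2 : m + (n₁ + 1) * 2^k' ≡ m [MOD 2^k] := by
        have heq : m + (n₁ + 1) * 2^k' = m + ((n₁+1) * 2^(k'-k)) * 2^k := by rw [hd]; ring
        rw [heq]; exact addmul m _ _
      have h3 : m + (n₁ + 1) * 2^k' ≡ n₁ [MOD 2^k] := h2.trans hm
      have h4 : n₁ ≤ m + (n₁ + 1) * 2^k' := by
        have := tpp k'
        have : n₁ + 1 ≤ (n₁ + 1) * 2^k' := Nat.le_mul_of_pos_right _ this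
        omega
      have h5 : ω (m + (n₁ + 1) * 2^k') = ω n₁ := eqcls (2^k) n₁ _ (tpp k) h₁ h3.symm h4
      rw [← h1, h5]
  have hfull : ∀ k n₁ m, P (2^k) n₁ → m ≡ n₁ [MOD 2^k] → P (2^k) m := by
    intro k n₁ m h₁ hm j hj
    have hmm : m + j * 2^k ≡ n₁ [MOD 2^k] := (addmul m j (2^k)).trans hm
    rw [hval0 k n₁ h₁ _ hmm, hval0 k n₁ h₁ m hm]
  have hhole : ∀ k, ∃ n, ¬ P (2^k) n := fun k => ⟨(hEPelt k).choose, (hEPelt k).choose_spec.2⟩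
  have hP1 : ∀ n, ¬ P (2^0) n := by
    intro n h
    have h1 : (1:ℕ) ∈ EP ω := by
      refine ⟨one_pos, n, ?_, ?_⟩
      · intro j hj
        have := h j hj
        simpa using this
      · intro p' h1 h2; omega
    rw [hEP] at h1
    obtain ⟨k, hk, h2⟩ := h1
    have h3 : (2:ℕ) ≤ 2^k := by
      calc (2:ℕ) = 2^1 := by norm_num
        _ ≤ 2^k := Nat.pow_le_pow_right (by norm_num) hk
    omega
  have two_classes : ∀ k ρ a bb cc : ℕ, a ≡ ρ [MOD 2^k] → bb ≡ ρ [MOD 2^k] → cc ≡ ρ [MOD 2^k] →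
      ¬ (bb ≡ cc [MOD 2^(k+1)]) → (a ≡ bb [MOD 2^(k+1)] ∨ a ≡ cc [MOD 2^(k+1)]) := by
    intro k ρ a bb cc ha hb hc hbc
    have d1 := class2 k a
    have d2 := class2 k bb
    have d3 := class2 k cc
    have e1 : a % 2^k = ρ % 2^k := ha
    have e2 : bb % 2^k = ρ % 2^k := hb
    have e3 : cc % 2^k = ρ % 2^k := hc
    have ne : ¬ (bb % 2^(k+1) = cc % 2^(k+1)) := hbc
    show a % 2^(k+1) = bb % 2^(k+1) ∨ a % 2^(k+1) = cc % 2^(k+1)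
    omega
  have key : ∀ k, ∃ rr, rr < 2^k ∧ ∀ n, (¬ P (2^k) n ↔ n ≡ rr [MOD 2^k]) := by
    intro k
    induction k with
    | zero =>
        refine ⟨0, by norm_num, fun n => ⟨fun _ => ?_, fun _ => hP1 n⟩⟩
        show n % 2^0 = 0 % 2^0
        simp [Nat.mod_one]
    | succ k ih =>
        obtain ⟨r, hr, hiff⟩ := ih
        obtain ⟨m, hmP, hmN⟩ := hEPelt k
        obtain ⟨n₀, hn₀⟩ := hhole (k+1)
        have hmono' : ∀ n, ¬ P (2^(k+1)) n → ¬ P (2^k) n :=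
          fun n h hk => h (Pmono k (k+1) n (Nat.le_succ k) hk)
        have hn₀r : n₀ ≡ r [MOD 2^k] := (hiff n₀).mp (hmono' _ hn₀)
        have hmr : m ≡ r [MOD 2^k] := (hiff m).mp hmN
        have hmn : ¬ (n₀ ≡ m [MOD 2^(k+1)]) := fun h => hn₀ (hfull (k+1) m n₀ hmP h)
        refine ⟨n₀ % 2^(k+1), Nat.mod_lt _ (tpp _), fun n => ⟨?_, ?_⟩⟩
        · intro h
          have hnr : n ≡ r [MOD 2^k] := (hiff n).mp (hmono' n h)
          rcases two_classes k r n n₀ m hnr hn₀r hmr hmn with h1 | h1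
          · exact h1.trans (Nat.mod_modEq n₀ (2^(k+1))).symm
          · exact absurd (hfull (k+1) m n hmP h1) h
        · intro h hcon
          apply hn₀
          have hnn₀ : n ≡ n₀ [MOD 2^(k+1)] := h.trans (Nat.mod_modEq n₀ (2^(k+1)))
          exact hfull (k+1) n n₀ hcon hnn₀.symm
  choose r hr1 hr2 using key
  have hrc : ∀ k, r (k+1) ≡ r k [MOD 2^k] := by
    intro k
    obtain ⟨n, hn⟩ := hhole (k+1)
    have h1 : n ≡ r (k+1) [MOD 2^(k+1)] := (hr2 (k+1) n).mp hn
    have h0 : n ≡ r k [MOD 2^k] := (hr2 k n).mp (fun hPk => hn (Pmono k (k+1) n (Nat.le_succ k) hPk))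
    exact ((h1.of_dvd (pow_dvd_pow 2 (Nat.le_succ k))).symm.trans h0)
  set b : ℕ → 𝒜 := fun d => ω (sib r d) with hbdef
  have hPiff : ∀ n k, P (2^k) n ↔ ¬ (n ≡ r k [MOD 2^k]) := by
    intro n k
    constructor
    · intro h hc
      exact ((hr2 k n).mpr hc) h
    · intro h
      by_contra hP
      exact h ((hr2 k n).mp hP)
  have hvalD : ∀ n k, n ≡ r k [MOD 2^k] → ¬(n ≡ r (k+1) [MOD 2^(k+1)]) → ω n = b k := by
    intro n k h1 h2
    obtain ⟨hsb, hs1, hs2, hs3⟩ := sib_spec hr1 hrc k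
    have hns : n ≡ sib r k [MOD 2^(k+1)] := hs3 n h1 h2
    have hPn : P (2^(k+1)) n := (hPiff n (k+1)).mpr h2
    have hPs : P (2^(k+1)) (sib r k) := (hPiff _ (k+1)).mpr hs2
    rcases Nat.le_total n (sib r k) with h | h
    · exact (eqcls (2^(k+1)) n (sib r k) (tpp _) hPn hns h).symm
    · exact eqcls (2^(k+1)) (sib r k) n (tpp _) hPs hns.symm h
  have hfin : ∀ n, ∃ j, ¬ n ≡ r j [MOD 2^j] := by
    intro n
    obtain ⟨k', -, hk'P, -⟩ := hmin n
    exact ⟨k', fun hc => ((hr2 k' n).mpr hc) hk'P⟩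
  have hdep : ∀ n k, n ≡ r k [MOD 2^k] → ∃ t, k ≤ t ∧ ω n = b t := by
    intro n k h1
    obtain ⟨e, he1, he2⟩ := exists_depth (hfin n)
    have hke : k ≤ e := by
      by_contra hke
      push_neg at hke
      exact he2 (cong_chain hrc h1 (by omega))
    exact ⟨e, hke, hvalD n e he1 he2⟩
  have hbne : ∀ d, ∃ t, d < t ∧ b t ≠ b d := by
    intro d
    by_contra hcon
    push_neg at hcon
    obtain ⟨n₀, hn₀⟩ := hhole (d+1)
    have hn₀r : n₀ ≡ r (d+1) [MOD 2^(d+1)] := (hr2 _ _).mp hn₀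
    have hcls : ∀ n, n ≡ r (d+1) [MOD 2^(d+1)] → ω n = b d := by
      intro n hn
      obtain ⟨t, ht1, ht2⟩ := hdep n (d+1) hn
      rw [ht2]
      exact hcon t (by omega)
    apply hn₀
    intro j hj
    rw [hcls _ ((addmul n₀ j (2^(d+1))).trans hn₀r), hcls n₀ hn₀r]
  exact ⟨r, b, ⟨hr1, hrc⟩, ⟨hvalD, hdep⟩, hbne⟩

lemma model_mem {𝒜 : Type*} [TopologicalSpace 𝒜] [DiscreteTopology 𝒜]
    (ω x : ℕ → 𝒜) (b : ℕ → 𝒜) (r c : ℕ → ℕ)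
    (hr : Coh r) (hω : ModelW b r ω) (hc : Coh c) (hx : ModelW b c x) :
    x ∈ orbitClosure ω := by
  classical
  obtain ⟨hr1, hrc⟩ := hr
  obtain ⟨hc1, hcc⟩ := hc
  rw [mem_orbitClosure_iff]
  intro L
  have lev : ∀ (t m : ℕ), (t + c m ≡ r m [MOD 2^m]) → ∀ k, k ≤ m → t + c k ≡ r k [MOD 2^k] := by
    intro t m h k hk
    have h1 : t + c m ≡ r k [MOD 2^k] := (h.of_dvd (pow_dvd_pow 2 hk)).trans (chain hrc hk)
    have h2 : t + c k ≡ t + c m [MOD 2^k] := Nat.ModEq.add_left t (chain hcc hk).symm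
    exact h2.trans h1
  have step : ∀ (t m i e : ℕ), (t + c m ≡ r m [MOD 2^m]) → e + 1 ≤ m →
      (i ≡ c e [MOD 2^e]) → ¬(i ≡ c (e+1) [MOD 2^(e+1)]) → ω (i + t) = x i := by
    intro t m i e ht hem h1 h2
    have l1 := lev t m ht e (by omega)
    have l2 := lev t m ht (e+1) hem
    have g1 : i + t ≡ r e [MOD 2^e] := (shiftiff l1 i).mpr h1
    have g2 : ¬ (i + t ≡ r (e+1) [MOD 2^(e+1)]) := fun hcon => h2 ((shiftiff l2 i).mp hcon)
    rw [hx.1 i e h1 h2, hω.1 (i+t) e g1 g2]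
  have dep : ∀ i k, ¬(i ≡ c k [MOD 2^k]) → ∃ e, e < k ∧ (i ≡ c e [MOD 2^e]) ∧ ¬(i ≡ c (e+1) [MOD 2^(e+1)]) := by
    intro i k hik
    obtain ⟨e, he1, he2⟩ := exists_depth ⟨k, hik⟩
    have hek : e < k := by
      by_contra h
      push_neg at h
      exact hik (cong_chain hcc he1 h)
    exact ⟨e, hek, he1, he2⟩
  by_cases HS : ∃ nstar, nstar < L ∧ nstar ≡ c L [MOD 2^L]
  · obtain ⟨ns, hnsL, hns⟩ := HS
    have huniq : ∀ i, i < L → (i ≡ c L [MOD 2^L]) → i = ns := by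
      intro i hi h
      have h' : i ≡ ns [MOD 2^L] := h.trans hns.symm
      exact h'.eq_of_lt_of_lt (lt_trans hi Nat.lt_two_pow_self) (lt_trans hnsL Nat.lt_two_pow_self)
    by_cases HF : ∃ k, ¬ ns ≡ c k [MOD 2^k]
    · obtain ⟨d, hd1, hd2⟩ := exists_depth HF
      have hdL : L ≤ d := by
        by_contra h
        push_neg at h
        exact hd2 (cong_chain hcc hns (by omega))
      have ht : ((r (d+1) + 2^(d+1) - c (d+1) % 2^(d+1)) % 2^(d+1)) + c (d+1) ≡ r (d+1) [MOD 2^(d+1)] :=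
        mkt_spec _ _ _ (tpp _)
      set t := (r (d+1) + 2^(d+1) - c (d+1) % 2^(d+1)) % 2^(d+1) with htd
      refine ⟨t, fun i hi => ?_⟩
      rcases em (i = ns) with he | hne
      · subst he
        exact step t (d+1) i d ht (le_refl _) hd1 hd2
      · have hik : ¬ (i ≡ c L [MOD 2^L]) := fun h => hne (huniq i hi h)
        obtain ⟨e, helt, h1, h2⟩ := dep i L hik
        exact step t (d+1) i e ht (by omega) h1 h2
    · push_neg at HF
      obtain ⟨s, hsk, hxs⟩ := hx.2 ns L (HF L)
      have ht0 : ((sib r s + 2^(s+1) - ns % 2^(s+1)) % 2^(s+1)) + ns ≡ sib r s [MOD 2^(s+1)] :=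
        mkt_spec _ _ _ (tpp _)
      set t := (sib r s + 2^(s+1) - ns % 2^(s+1)) % 2^(s+1) with htd
      obtain ⟨hsb, hsibc, hsibn, -⟩ := sib_spec hr1 hrc s
      have hts : t + c s ≡ r s [MOD 2^s] := by
        have h1 : t + ns ≡ sib r s [MOD 2^s] := ht0.of_dvd (pow_dvd_pow 2 (Nat.le_succ s))
        have h2 : t + ns ≡ r s [MOD 2^s] := h1.trans hsibc
        have h3 : t + c s ≡ t + ns [MOD 2^s] := Nat.ModEq.add_left t (HF s).symm
        exact h3.trans h2
      refine ⟨t, fun i hi => ?_⟩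
      rcases em (i = ns) with he | hne
      · subst he
        have g1 : i + t ≡ r s [MOD 2^s] := by
          have h' : i + t ≡ sib r s [MOD 2^s] := by
            have h'' := ht0.of_dvd (pow_dvd_pow 2 (Nat.le_succ s))
            calc i + t = t + i := Nat.add_comm _ _
              _ ≡ sib r s [MOD 2^s] := h''
          exact h'.trans hsibc
        have g2 : ¬ (i + t ≡ r (s+1) [MOD 2^(s+1)]) := by
          intro hcon
          apply hsibn
          have h' : i + t ≡ sib r s [MOD 2^(s+1)] := by
            calc i + t = t + i := Nat.add_comm _ _
              _ ≡ sib r s [MOD 2^(s+1)] := ht0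
          exact h'.symm.trans hcon
        rw [hxs, hω.1 (i+t) s g1 g2]
      · have hik : ¬ (i ≡ c L [MOD 2^L]) := fun h => hne (huniq i hi h)
        obtain ⟨e, helt, h1, h2⟩ := dep i L hik
        exact step t s i e hts (by omega) h1 h2
  · have ht : ((r L + 2^L - c L % 2^L) % 2^L) + c L ≡ r L [MOD 2^L] := mkt_spec _ _ _ (tpp _)
    set t := (r L + 2^L - c L % 2^L) % 2^L with htd
    refine ⟨t, fun i hi => ?_⟩
    have hik : ¬ (i ≡ c L [MOD 2^L]) := fun h => HS ⟨i, hi, h⟩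
    obtain ⟨e, helt, h1, h2⟩ := dep i L hik
    exact step t L i e ht (by omega) h1 h2

lemma mem_model {𝒜 : Type*} [TopologicalSpace 𝒜] [DiscreteTopology 𝒜]
    (ω x : ℕ → 𝒜) (b : ℕ → 𝒜) (r : ℕ → ℕ)
    (hr : Coh r) (hω : ModelW b r ω) (hb : ∀ d, ∃ t, d < t ∧ b t ≠ b d)
    (hx : x ∈ orbitClosure ω) : ∃ c, Coh c ∧ ModelW b c x := by
  classical
  obtain ⟨hr1, hrc⟩ := hr
  rw [mem_orbitClosure_iff] at hx
  choose T hTT using hx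
  set ρ : ℕ → ℕ → ℕ := fun k L => (r k + 2^k - T L % 2^k) % 2^k with hρ
  have hρlt : ∀ k L, ρ k L < 2^k := fun k L => Nat.mod_lt _ (tpp k)
  have hρspec : ∀ k L, T L + ρ k L ≡ r k [MOD 2^k] := by
    intro k L
    have h := mkt_spec (r k) (T L) (2^k) (tpp k)
    calc T L + ρ k L = ρ k L + T L := Nat.add_comm _ _
      _ ≡ r k [MOD 2^k] := h
  have omval : ∀ k a a', a ≡ a' [MOD 2^k] → ¬ (a ≡ r k [MOD 2^k]) → ω a = ω a' := by
    intro k a a' hmn hak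
    obtain ⟨e, he1, he2⟩ := exists_depth ⟨k, hak⟩
    have hek : e < k := by
      by_contra h
      push_neg at h
      exact hak (cong_chain hrc he1 h)
    have h1' : a' ≡ r e [MOD 2^e] := ((hmn.symm).of_dvd (pow_dvd_pow 2 (by omega))).trans he1
    have h2' : ¬ (a' ≡ r (e+1) [MOD 2^(e+1)]) := by
      intro hcon
      exact he2 ((hmn.of_dvd (pow_dvd_pow 2 (by omega))).trans hcon)
    rw [hω.1 a e he1 he2, hω.1 a' e h1' h2']
  have contra : ∀ k v v', v < 2^k → v' < 2^k →
      (∀ N, ∃ L, N ≤ L ∧ ρ k L = v) → (∀ N, ∃ L, N ≤ L ∧ ρ k L = v') → v ≠ v' → False := by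
    intro k v v' hv hv' hio hio' hne
    have xper : ∀ n m, n ≡ m [MOD 2^k] → x n = x m := by
      intro n m hnm
      have hw : ∃ w, (∀ N, ∃ L, N ≤ L ∧ ρ k L = w) ∧ ¬ (n ≡ w [MOD 2^k]) := by
        rcases em (n ≡ v [MOD 2^k]) with h | h
        · refine ⟨v', hio', fun hcon => hne ?_⟩
          exact (h.symm.trans hcon).eq_of_lt_of_lt hv hv'
        · exact ⟨v, hio, h⟩
      obtain ⟨w, hwio, hnw⟩ := hw
      obtain ⟨L, hL, hρL⟩ := hwio (n + m + 1)
      have hn : x n = ω (n + T L) := (hTT L n (by omega)).symm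
      have hm : x m = ω (m + T L) := (hTT L m (by omega)).symm
      have hkey : ¬ (n + T L ≡ r k [MOD 2^k]) := by
        intro hcon
        exact hnw (by rw [← hρL]; exact (shiftiff (hρspec k L) n).mp hcon)
      have heq : ω (n + T L) = ω (m + T L) := omval k _ _ (Nat.ModEq.add_right (T L) hnm) hkey
      rw [hn, hm, heq]
    have hbc : ∀ e, k ≤ e → b e = b k := by
      intro e he
      have h2e : (2:ℕ)^(k+1) ≤ 2^(e+1) := Nat.pow_le_pow_right (by norm_num) (by omega)
      set L := 2^(e+1) + 2^(e+1) with hLd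
      set t := T L with htd
      obtain ⟨hsbk, hsk1, hsk2, -⟩ := sib_spec hr1 hrc k
      obtain ⟨hsbe, hse1, hse2, -⟩ := sib_spec hr1 hrc e
      have hb₁ : ((sib r k + 2^(k+1) - t % 2^(k+1)) % 2^(k+1)) + t ≡ sib r k [MOD 2^(k+1)] :=
        mkt_spec _ _ _ (tpp _)
      have hb₂ : ((sib r e + 2^(e+1) - t % 2^(e+1)) % 2^(e+1)) + t ≡ sib r e [MOD 2^(e+1)] :=
        mkt_spec _ _ _ (tpp _)
      set n₁ := (sib r k + 2^(k+1) - t % 2^(k+1)) % 2^(k+1) with hn₁d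
      set n₂ := (sib r e + 2^(e+1) - t % 2^(e+1)) % 2^(e+1) with hn₂d
      have hn₁L : n₁ < L := lt_of_lt_of_le (Nat.mod_lt _ (tpp _)) (by omega)
      have hn₂L : n₂ < L := lt_of_lt_of_le (Nat.mod_lt _ (tpp _)) (by omega)
      have hv₁ : ω (n₁ + t) = b k := by
        refine hω.1 _ k ((hb₁.of_dvd (pow_dvd_pow 2 (Nat.le_succ k))).trans hsk1) ?_
        intro hcon
        exact hsk2 (hb₁.symm.trans hcon)
      have hv₂ : ω (n₂ + t) = b e := by
        refine hω.1 _ e ((hb₂.of_dvd (pow_dvd_pow 2 (Nat.le_succ e))).trans hse1) ?_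
        intro hcon
        exact hse2 (hb₂.symm.trans hcon)
      have hx₁ : ω (n₁ + t) = x n₁ := hTT L n₁ hn₁L
      have hx₂ : ω (n₂ + t) = x n₂ := hTT L n₂ hn₂L
      have hcls : n₁ ≡ n₂ [MOD 2^k] := by
        have c₁ : n₁ + t ≡ r k [MOD 2^k] :=
          (hb₁.of_dvd (pow_dvd_pow 2 (Nat.le_succ k))).trans hsk1
        have c₂ : n₂ + t ≡ r k [MOD 2^k] := by
          have d1 : n₂ + t ≡ sib r e [MOD 2^e] := hb₂.of_dvd (pow_dvd_pow 2 (Nat.le_succ e))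
          have d2 : n₂ + t ≡ r e [MOD 2^e] := d1.trans hse1
          exact (d2.of_dvd (pow_dvd_pow 2 he)).trans (chain hrc he)
        exact Nat.ModEq.add_right_cancel' t (c₁.trans c₂.symm)
      have hfin := xper n₁ n₂ hcls
      rw [← hx₁, ← hx₂, hv₁, hv₂] at hfin
      exact hfin.symm
    obtain ⟨t', ht', hneq⟩ := hb k
    exact hneq (hbc t' (by omega))
  have ex_IO : ∀ k, ∃ v, v < 2^k ∧ ∀ N, ∃ L, N ≤ L ∧ ρ k L = v := by
    intro k
    by_contra hcon
    push_neg at hcon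
    choose! N hN using hcon
    set B := (Finset.range (2^k)).sup N with hB
    have h1 : ρ k B < 2^k := hρlt k B
    have h2 : N (ρ k B) ≤ B := Finset.le_sup (f := N) (Finset.mem_range.mpr h1)
    exact hN (ρ k B) h1 B h2 rfl
  choose cfun hclt hcio using ex_IO
  have uniqv : ∀ k v, v < 2^k → (∀ N, ∃ L, N ≤ L ∧ ρ k L = v) → v = cfun k := by
    intro k v hv hio
    by_contra hne
    exact contra k v (cfun k) hv (hclt k) hio (hcio k) hne
  have down : ∀ k L, ρ k L ≡ ρ (k+1) L [MOD 2^k] := by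
    intro k L
    have e1 : T L + ρ k L ≡ r k [MOD 2^k] := hρspec k L
    have e2 : T L + ρ (k+1) L ≡ r (k+1) [MOD 2^(k+1)] := hρspec (k+1) L
    have e3 : T L + ρ (k+1) L ≡ r k [MOD 2^k] :=
      (e2.of_dvd (pow_dvd_pow 2 (Nat.le_succ k))).trans (hrc k)
    exact Nat.ModEq.add_left_cancel' (T L) (e1.trans e3.symm)
  have hcc : ∀ k, cfun (k+1) ≡ cfun k [MOD 2^k] := by
    intro k
    have h1 : cfun (k+1) % 2^k < 2^k := Nat.mod_lt _ (tpp k)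
    have h2 : ∀ N, ∃ L, N ≤ L ∧ ρ k L = cfun (k+1) % 2^k := by
      intro N
      obtain ⟨L, hL, hρL⟩ := hcio (k+1) N
      refine ⟨L, hL, ?_⟩
      have e4 := down k L
      rw [hρL] at e4
      have e5 : ρ k L ≡ cfun (k+1) % 2^k [MOD 2^k] := e4.trans (Nat.mod_modEq _ _).symm
      exact e5.eq_of_lt_of_lt (hρlt k L) h1
    have h3 := uniqv k _ h1 h2
    calc cfun (k+1) ≡ cfun (k+1) % 2^k [MOD 2^k] := (Nat.mod_modEq _ _).symm
      _ = cfun k := h3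
  have joint : ∀ k N, ∃ L, N ≤ L ∧ ρ (k+1) L = cfun (k+1) ∧ ρ k L = cfun k := by
    intro k N
    obtain ⟨L, hL, h1⟩ := hcio (k+1) N
    refine ⟨L, hL, h1, ?_⟩
    have e4 := down k L
    rw [h1] at e4
    have e5 : ρ k L ≡ cfun k [MOD 2^k] := e4.trans (hcc k)
    exact e5.eq_of_lt_of_lt (hρlt k L) (hclt k)
  refine ⟨cfun, ⟨hclt, hcc⟩, ?_, ?_⟩
  · intro n k h1 h2
    obtain ⟨L, hL, hk1, hk0⟩ := joint k (n+1)
    have hxn : x n = ω (n + T L) := (hTT L n (by omega)).symm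
    have g1 : n + T L ≡ r k [MOD 2^k] :=
      (shiftiff (hρspec k L) n).mpr (by rw [hk0]; exact h1)
    have g2 : ¬ (n + T L ≡ r (k+1) [MOD 2^(k+1)]) := by
      intro hcon
      apply h2
      have h3 := (shiftiff (hρspec (k+1) L) n).mp hcon
      rw [hk1] at h3
      exact h3
    rw [hxn, hω.1 _ k g1 g2]
  · intro n k h1
    obtain ⟨L, hL, hρL⟩ := hcio k (n+1)
    have hxn : x n = ω (n + T L) := (hTT L n (by omega)).symm
    have g1 : n + T L ≡ r k [MOD 2^k] :=
      (shiftiff (hρspec k L) n).mpr (by rw [hρL]; exact h1)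
    obtain ⟨t', ht', hv⟩ := hω.2 (n + T L) k g1
    exact ⟨t', ht', by rw [hxn, hv]⟩

lemma exists_io {𝒜 : Type*} [Fintype 𝒜] (f : ℕ → 𝒜) : ∃ a, ∀ N, ∃ t, N ≤ t ∧ f t = a := by
  classical
  by_contra hcon
  push_neg at hcon
  choose N hN using hcon
  exact hN (f (Finset.univ.sup N)) (Finset.univ.sup N) (Finset.le_sup (Finset.mem_univ _)) rfl

lemma big2 {𝒜 : Type*} [Fintype 𝒜] (b : ℕ → 𝒜) (hb : ∀ d, ∃ t, d < t ∧ b t ≠ b d) :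
    ∃ a a', a ≠ a' ∧ (∀ N, ∃ t, N ≤ t ∧ b t = a) ∧ (∀ N, ∃ t, N ≤ t ∧ b t = a') := by
  classical
  obtain ⟨a, ha⟩ := exists_io b
  have hne : ∀ N, ∃ t, N ≤ t ∧ b t ≠ a := by
    intro N
    by_contra h
    push_neg at h
    obtain ⟨t0, ht0, ht0'⟩ := ha N
    obtain ⟨t1, ht1, hne1⟩ := hb t0
    exact hne1 (by rw [h t1 (by omega), h t0 ht0])
  choose g hg1 hg2 using hne
  obtain ⟨a', ha'⟩ := exists_io (fun N => b (g N))
  refine ⟨a, a', ?_, ha, ?_⟩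
  · obtain ⟨t, -, ht⟩ := ha' 0
    intro hcon
    exact hg2 t (ht.trans hcon.symm)
  · intro N
    obtain ⟨t, hJt, ht⟩ := ha' N
    exact ⟨g t, le_trans hJt (hg1 t), ht⟩

lemma nu_iff (n k : ℕ) (hn : n ≠ 0) : (n ≡ 0 [MOD 2^k]) ↔ k ≤ padicValNat 2 n := by
  rw [Nat.modEq_zero_iff_dvd]
  exact padicValNat_dvd_iff_le hn

lemma pred_cong (n k : ℕ) : (n ≡ 2^k - 1 [MOD 2^k]) ↔ (n + 1 ≡ 0 [MOD 2^k]) := by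
  have h2 : 2^k - 1 + 1 = 2^k := by have := tpp k; omega
  have hz : (2:ℕ)^k ≡ 0 [MOD 2^k] := Nat.modEq_zero_iff_dvd.mpr dvd_rfl
  constructor
  · intro h
    have h1 := Nat.ModEq.add_right 1 h
    rw [h2] at h1
    exact h1.trans hz
  · intro h
    have h1 : n + 1 ≡ 2^k [MOD 2^k] := h.trans hz.symm
    have h1x : n + 1 ≡ (2^k - 1) + 1 [MOD 2^k] := by rw [h2]; exact h1
    exact Nat.ModEq.add_right_cancel' 1 h1x


end T6

open T6

/-- For a Toeplitz sequence `ω` with `EP(ω) = {2^k : k ≥ 1}`: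
(a) the shift maps `Z(ω,σ)` onto itself;
(b) there is a unique `ω* ∈ Z(ω,σ)` with more than one shift-preimage in `Z(ω,σ)`;
(c) `x ∈ Z(ω,σ)` is not Toeplitz iff `σ^n x = ω*` for some `n ≥ 1`. -/
theorem stmt6 {𝒜 : Type*} [Fintype 𝒜] [Nonempty 𝒜] [TopologicalSpace 𝒜] [DiscreteTopology 𝒜]
    (ω : ℕ → 𝒜) (hT : IsToeplitz ω)
    (hEP : EP ω = {p : ℕ | ∃ k : ℕ, 1 ≤ k ∧ p = 2 ^ k}) :
    (∀ x ∈ orbitClosure ω, ∃ y ∈ orbitClosure ω, shift y = x) ∧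
    ∃ ωs ∈ orbitClosure ω,
      (∃ η₁ ∈ orbitClosure ω, ∃ η₂ ∈ orbitClosure ω,
        η₁ ≠ η₂ ∧ shift η₁ = ωs ∧ shift η₂ = ωs) ∧
      (∀ w ∈ orbitClosure ω,
        (∃ η₁ ∈ orbitClosure ω, ∃ η₂ ∈ orbitClosure ω,
          η₁ ≠ η₂ ∧ shift η₁ = w ∧ shift η₂ = w) → w = ωs) ∧
      (∀ x ∈ orbitClosure ω, (¬ IsToeplitz x ↔ ∃ n : ℕ, 1 ≤ n ∧ shift^[n] x = ωs)) := by
  classical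
  obtain ⟨r, b, hcoh_r, hω, hb⟩ := structure_thm ω hT hEP
  obtain ⟨a₁, a₂, hane, hio₁, hio₂⟩ := big2 b hb
  set ωs : ℕ → 𝒜 := fun n => b (padicValNat 2 (n+1)) with hωs
  have hωs_eval : ∀ m, ωs m = b (padicValNat 2 (m+1)) := fun m => rfl
  -- the model of ωs
  have hcs : Coh (fun k => 2^k - 1) := by
    constructor
    · intro k
      show 2^k - 1 < 2^k
      have := tpp k; omega
    · intro k
      show (2:ℕ)^(k+1) - 1 ≡ 2^k - 1 [MOD 2^k]
      have h1 := tpp k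
      have h2 : (2:ℕ)^(k+1) = 2^k + 2^k := by rw [pow_succ]; omega
      have he : (2:ℕ)^(k+1) - 1 = (2^k - 1) + 1 * 2^k := by omega
      rw [he]
      exact addmul _ 1 _
  have hmodel_ωs : ModelW b (fun k => 2^k - 1) ωs := by
    constructor
    · intro n k h1 h2
      have e1 : k ≤ padicValNat 2 (n+1) := (nu_iff (n+1) k (by omega)).mp ((pred_cong n k).mp h1)
      have e2 : ¬ (k+1 ≤ padicValNat 2 (n+1)) := fun hcon =>
        h2 ((pred_cong n (k+1)).mpr ((nu_iff (n+1) (k+1) (by omega)).mpr hcon))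
      have e3 : padicValNat 2 (n+1) = k := by omega
      rw [hωs_eval, e3]
    · intro n k h1
      exact ⟨padicValNat 2 (n+1), (nu_iff (n+1) k (by omega)).mp ((pred_cong n k).mp h1), rfl⟩
  have hωs_mem : ωs ∈ orbitClosure ω := model_mem ω ωs b r _ hcoh_r hω hcs hmodel_ωs
  -- the two preimages of ωs
  have hcoh0 : Coh (fun _ : ℕ => 0) := ⟨fun k => tpp k, fun k => Nat.ModEq.refl 0⟩
  set η : 𝒜 → (ℕ → 𝒜) := fun a n => if n = 0 then a else b (padicValNat 2 n) with hη
  have hη_eval0 : ∀ a, η a 0 = a := fun a => rfl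
  have hη_evalS : ∀ a m, η a (m+1) = b (padicValNat 2 (m+1)) := fun a m => if_neg (Nat.succ_ne_zero m)
  have hmodel_η : ∀ a, (∀ N, ∃ t, N ≤ t ∧ b t = a) → ModelW b (fun _ : ℕ => 0) (η a) := by
    intro a haio
    constructor
    · intro n k h1 h2
      have hn0 : n ≠ 0 := by
        intro h
        subst h
        exact h2 (Nat.ModEq.refl _)
      obtain ⟨m, hm⟩ := Nat.exists_eq_succ_of_ne_zero hn0
      subst hm
      rw [hη_evalS]
      have e1 : k ≤ padicValNat 2 (m+1) := (nu_iff (m+1) k (by omega)).mp h1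
      have e2 : ¬ (k+1 ≤ padicValNat 2 (m+1)) := fun hcon => h2 ((nu_iff (m+1) (k+1) (by omega)).mpr hcon)
      have e3 : padicValNat 2 (m+1) = k := by omega
      rw [e3]
    · intro n k h1
      rcases Nat.eq_zero_or_pos n with hn | hn
      · subst hn
        obtain ⟨t, ht1, ht2⟩ := haio k
        exact ⟨t, ht1, ht2.symm⟩
      · obtain ⟨m, hm⟩ := Nat.exists_eq_succ_of_ne_zero (by omega : n ≠ 0)
        subst hm
        rw [hη_evalS]
        exact ⟨padicValNat 2 (m+1), (nu_iff (m+1) k (by omega)).mp h1, rfl⟩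
  have hη₁mem : η a₁ ∈ orbitClosure ω := model_mem ω _ b r _ hcoh_r hω hcoh0 (hmodel_η a₁ hio₁)
  have hη₂mem : η a₂ ∈ orbitClosure ω := model_mem ω _ b r _ hcoh_r hω hcoh0 (hmodel_η a₂ hio₂)
  have hshiftη : ∀ a, shift (η a) = ωs := by
    intro a
    funext m
    show η a (m+1) = ωs m
    rw [hη_evalS, hωs_eval]
  have hηne : η a₁ ≠ η a₂ := by
    intro h
    apply hane
    have := congrFun h 0
    rwa [hη_eval0, hη_eval0] at this
  -- part (a)
  have part_a : ∀ x ∈ orbitClosure ω, ∃ y ∈ orbitClosure ω, shift y = x := by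
    intro x hx
    obtain ⟨c, hc, hxm⟩ := mem_model ω x b r hcoh_r hω hb hx
    set c' : ℕ → ℕ := fun k => (c k + 1) % 2^k with hc'd
    have hc'lt : ∀ k, c' k < 2^k := fun k => Nat.mod_lt _ (tpp k)
    have hc'me : ∀ k, c' k ≡ c k + 1 [MOD 2^k] := fun k => Nat.mod_modEq _ _
    have hshiftc : ∀ n k, ((n+1) ≡ c' k [MOD 2^k]) ↔ (n ≡ c k [MOD 2^k]) := by
      intro n k
      constructor
      · intro h
        exact Nat.ModEq.add_right_cancel' 1 (h.trans (hc'me k))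
      · intro h
        exact (Nat.ModEq.add_right 1 h).trans (hc'me k).symm
    have hc'coh : ∀ k, c' (k+1) ≡ c' k [MOD 2^k] := by
      intro k
      have h2 : c' (k+1) ≡ c (k+1) + 1 [MOD 2^k] :=
        (hc'me (k+1)).of_dvd (pow_dvd_pow 2 (Nat.le_succ k))
      have h3 : c (k+1) + 1 ≡ c k + 1 [MOD 2^k] := Nat.ModEq.add_right 1 (hc.2 k)
      exact (h2.trans h3).trans (hc'me k).symm
    -- choose the value at position 0
    have main : ∀ v : 𝒜, (∀ k, (0 ≡ c' k [MOD 2^k]) → ∃ t, k ≤ t ∧ v = b t) →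
        (∀ k, (0 ≡ c' k [MOD 2^k]) → ¬(0 ≡ c' (k+1) [MOD 2^(k+1)]) → v = b k) →
        ∃ y ∈ orbitClosure ω, shift y = x := by
      intro v hv1 hv2
      set y : ℕ → 𝒜 := fun n => if n = 0 then v else x (n-1) with hyd
      have hy0 : y 0 = v := rfl
      have hyS : ∀ m, y (m+1) = x m := fun m => by
        show (if m+1 = 0 then v else x (m+1-1)) = x m
        rw [if_neg (Nat.succ_ne_zero m)]
        congr 1
      have hym : ModelW b c' y := by
        constructor
        · intro n k h1 h2
          rcases Nat.eq_zero_or_pos n with hn | hn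
          · subst hn
            rw [hy0]
            exact hv2 k h1 h2
          · obtain ⟨m, hm⟩ := Nat.exists_eq_succ_of_ne_zero (by omega : n ≠ 0)
            subst hm
            rw [hyS]
            exact hxm.1 m k ((hshiftc m k).mp h1) (fun hcon => h2 ((hshiftc m (k+1)).mpr hcon))
          
        · intro n k h1
          rcases Nat.eq_zero_or_pos n with hn | hn
          · subst hn
            rw [hy0]
            exact hv1 k h1
          · obtain ⟨m, hm⟩ := Nat.exists_eq_succ_of_ne_zero (by omega : n ≠ 0)
            subst hm
            rw [hyS]
            exact hxm.2 m k ((hshiftc m k).mp h1)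
      refine ⟨y, model_mem ω y b r _ hcoh_r hω ⟨hc'lt, hc'coh⟩ hym, ?_⟩
      funext m
      show y (m+1) = x m
      exact hyS m
    by_cases H0 : ∃ k, ¬ (0 ≡ c' k [MOD 2^k])
    · obtain ⟨e, he1, he2⟩ := exists_depth H0
      refine main (b e) ?_ ?_
      · intro k h1
        refine ⟨e, ?_, rfl⟩
        by_contra hcon
        push_neg at hcon
        exact he2 (cong_chain hc'coh h1 (by omega))
      · intro k h1 h2
        rw [depth_unique hc'coh he1 he2 h1 h2]
    · push_neg at H0
      refine main a₁ ?_ ?_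
      · intro k _
        obtain ⟨t, ht1, ht2⟩ := hio₁ k
        exact ⟨t, ht1, ht2.symm⟩
      · intro k _ h2
        exact absurd (H0 (k+1)) h2
  -- uniqueness
  have uniq : ∀ w ∈ orbitClosure ω,
      (∃ η₁ ∈ orbitClosure ω, ∃ η₂ ∈ orbitClosure ω,
        η₁ ≠ η₂ ∧ shift η₁ = w ∧ shift η₂ = w) → w = ωs := by
    rintro w hw ⟨y, hy, y', hy', hne, hs, hs'⟩
    obtain ⟨c, hc, hym⟩ := mem_model ω y b r hcoh_r hω hb hy
    obtain ⟨c'', hc'', hym'⟩ := mem_model ω y' b r hcoh_r hω hb hy'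
    have hagree : ∀ n, y (n+1) = y' (n+1) := by
      intro n
      have h1 : shift y n = shift y' n := by rw [hs, hs']
      exact h1
    have hd0 : y 0 ≠ y' 0 := by
      intro h
      apply hne
      funext n
      cases n with
      | zero => exact h
      | succ m => exact hagree m
    by_cases HC : ∀ k, c k = c'' k
    · have hc0 : ∀ k, c k = 0 := by
        by_contra hcon
        push_neg at hcon
        obtain ⟨k0, hk0⟩ := hcon
        have hex : ∃ k, ¬ (0 ≡ c k [MOD 2^k]) := by
          refine ⟨k0, ?_⟩
          intro hcon2
          have h1 : (0:ℕ) % 2^k0 = c k0 % 2^k0 := hcon2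
          rw [Nat.zero_mod, Nat.mod_eq_of_lt (hc.1 k0)] at h1
          exact hk0 h1.symm
        obtain ⟨e, he1, he2⟩ := exists_depth hex
        have v1 : y 0 = b e := hym.1 0 e he1 he2
        have v2 : y' 0 = b e := hym'.1 0 e (by rw [← HC e]; exact he1) (by rw [← HC (e+1)]; exact he2)
        exact hd0 (v1.trans v2.symm)
      funext m
      have h1 : w m = y (m+1) := by rw [← hs]; rfl
      have hzk : ∀ k, ((m+1) ≡ c k [MOD 2^k]) ↔ ((m+1) ≡ 0 [MOD 2^k]) := fun k => by rw [hc0 k]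
      have e1 : (m+1) ≡ c (padicValNat 2 (m+1)) [MOD 2^(padicValNat 2 (m+1))] :=
        (hzk _).mpr ((nu_iff (m+1) (padicValNat 2 (m+1)) (by omega)).mpr (le_refl _))
      have e2 : ¬ ((m+1) ≡ c (padicValNat 2 (m+1)+1) [MOD 2^(padicValNat 2 (m+1)+1)]) := by
        rw [hzk (padicValNat 2 (m+1)+1)]
        intro hcon
        have := (nu_iff (m+1) (padicValNat 2 (m+1)+1) (by omega)).mp hcon
        omega
      rw [h1, hym.1 (m+1) (padicValNat 2 (m+1)) e1 e2, hωs_eval]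
    · push_neg at HC
      have hex : ∃ s, c s ≠ c'' s := HC
      have hs₀pos : Nat.find hex ≠ 0 := by
        intro h
        apply Nat.find_spec hex
        have e0 : (2:ℕ)^0 = 1 := pow_zero 2
        have l1 := hc.1 0
        have l2 := hc''.1 0
        have : c 0 = 0 := by omega
        have : c'' 0 = 0 := by omega
        rw [h]
        omega
      obtain ⟨e₀, he₀⟩ := Nat.exists_eq_succ_of_ne_zero hs₀pos
      have hspec : c (e₀+1) ≠ c'' (e₀+1) := by
        have := Nat.find_spec hex
        rwa [he₀] at this
      have hmin' : ∀ j, j ≤ e₀ → c j = c'' j := by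
        intro j hj
        by_contra hcon
        exact Nat.find_min hex (by omega) hcon
      have hbt : ∀ t, e₀ + 1 ≤ t → b t = b e₀ := by
        intro t htge
        obtain ⟨hsb, hs1, hs2, -⟩ := sib_spec hc.1 hc.2 t
        set n := sib c t + 2^(t+1) with hnd
        have hsibm : n ≡ sib c t [MOD 2^(t+1)] := by
          show sib c t + 2^(t+1) ≡ sib c t [MOD 2^(t+1)]
          have h := addmul (sib c t) 1 (2^(t+1))
          rwa [one_mul] at h
        have hn1 : n ≡ c t [MOD 2^t] :=
          (hsibm.of_dvd (pow_dvd_pow 2 (Nat.le_succ t))).trans hs1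
        have hn2 : ¬ (n ≡ c (t+1) [MOD 2^(t+1)]) := fun hcon => hs2 (hsibm.symm.trans hcon)
        have v1 : y n = b t := hym.1 n t hn1 hn2
        have g1 : n ≡ c'' e₀ [MOD 2^e₀] := by
          rw [← hmin' e₀ (le_refl _)]
          exact cong_chain hc.2 hn1 (by omega)
        have g2 : ¬ (n ≡ c'' (e₀+1) [MOD 2^(e₀+1)]) := by
          intro hcon
          have g3 : n ≡ c (e₀+1) [MOD 2^(e₀+1)] := cong_chain hc.2 hn1 (by omega)
          exact hspec ((g3.symm.trans hcon).eq_of_lt_of_lt (hc.1 _) (hc''.1 _))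
        have v2 : y' n = b e₀ := hym'.1 n e₀ g1 g2
        have hpos : 1 ≤ n := by have := tpp (t+1); omega
        have hyy : y n = y' n := by
          have h1 := hagree (n-1)
          have hn' : n - 1 + 1 = n := by omega
          rwa [hn'] at h1
        rw [← v1, hyy, v2]
      obtain ⟨t', ht', hneq⟩ := hb e₀
      exact absurd (hbt t' (by omega)) hneq
  -- part (c)
  have part_c : ∀ x ∈ orbitClosure ω, (¬ IsToeplitz x ↔ ∃ n, 1 ≤ n ∧ shift^[n] x = ωs) := by
    intro x hx
    constructor
    · intro hnt
      by_contra hcon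
      push_neg at hcon
      apply hnt
      obtain ⟨c, hc, hxm⟩ := mem_model ω x b r hcoh_r hω hb hx
      intro n
      by_cases HF : ∃ k, ¬ (n ≡ c k [MOD 2^k])
      · obtain ⟨e, he1, he2⟩ := exists_depth HF
        refine ⟨2^(e+1), tpp _, ?_⟩
        intro j hj
        have m1 : n + j * 2^(e+1) ≡ c e [MOD 2^e] :=
          ((addmul n j (2^(e+1))).of_dvd (pow_dvd_pow 2 (Nat.le_succ e))).trans he1
        have m2 : ¬ (n + j * 2^(e+1) ≡ c (e+1) [MOD 2^(e+1)]) := by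
          intro hcon2
          exact he2 ((addmul n j (2^(e+1))).symm.trans hcon2)
        rw [hxm.1 _ e m1 m2, hxm.1 n e he1 he2]
      · push_neg at HF
        exfalso
        apply hcon (n+1) (by omega)
        funext m
        rw [shift_iter]
        have hmn : m + (n+1) = (m+1) + n := by omega
        have key : ∀ k, ((m + (n+1)) ≡ c k [MOD 2^k]) ↔ ((m+1) ≡ 0 [MOD 2^k]) := by
          intro k
          constructor
          · intro h
            have h2 : (m+1) + n ≡ c k [MOD 2^k] := by rw [← hmn]; exact h
            have h4 : (m+1) + n ≡ 0 + n [MOD 2^k] := by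
              have := h2.trans (HF k).symm
              simpa using this
            exact Nat.ModEq.add_right_cancel' n h4
          · intro h
            have h4 : (m+1) + n ≡ 0 + n [MOD 2^k] := Nat.ModEq.add_right n h
            have h5 : (m+1) + n ≡ n [MOD 2^k] := by simpa using h4
            rw [hmn]
            exact h5.trans (HF k)
        have e1 : (m + (n+1)) ≡ c (padicValNat 2 (m+1)) [MOD 2^(padicValNat 2 (m+1))] :=
          (key _).mpr ((nu_iff (m+1) (padicValNat 2 (m+1)) (by omega)).mpr (le_refl _))
        have e2 : ¬ ((m + (n+1)) ≡ c (padicValNat 2 (m+1)+1) [MOD 2^(padicValNat 2 (m+1)+1)]) := by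
          rw [key (padicValNat 2 (m+1)+1)]
          intro hcon2
          have := (nu_iff (m+1) (padicValNat 2 (m+1)+1) (by omega)).mp hcon2
          omega
        rw [hxm.1 _ (padicValNat 2 (m+1)) e1 e2, hωs_eval]
    · rintro ⟨n, hn1, hn2⟩ hTx
      obtain ⟨p, hp, hper⟩ := hTx (n-1)
      have hval : ∀ j, 0 < j → b (padicValNat 2 (j * p)) = x (n-1) := by
        intro j hj
        have hjp : 1 ≤ j * p := Nat.mul_pos hj hp
        have h1 : x (n - 1 + j * p) = x (n-1) := hper j hj
        have h4 : j*p - 1 + 1 = j*p := by omega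
        calc b (padicValNat 2 (j*p)) = b (padicValNat 2 ((j*p -1) + 1)) := by rw [h4]
          _ = ωs (j*p - 1) := (hωs_eval _).symm
          _ = x ((j*p-1) + n) := by rw [← hn2, shift_iter]
          _ = x (n - 1 + j*p) := by congr 1; omega
          _ = x (n-1) := h1
      have hpne : p ≠ 0 := by omega
      have hnu : ∀ i : ℕ, padicValNat 2 (2^i * p) = i + padicValNat 2 p := by
        intro i
        rw [padicValNat.mul (tpp i).ne' hpne, padicValNat.prime_pow]
      obtain ⟨t', ht', hneq⟩ := hb (padicValNat 2 p)
      apply hneq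
      have h5 := hval (2^(t' - padicValNat 2 p)) (tpp _)
      rw [hnu] at h5
      have h7 : t' - padicValNat 2 p + padicValNat 2 p = t' := by omega
      rw [h7] at h5
      have h6 := hval 1 one_pos
      rw [one_mul] at h6
      rw [h5]
      exact h6.symm
  exact ⟨part_a, ωs, hωs_mem, ⟨η a₁, hη₁mem, η a₂, hη₂mem, hηne, hshiftη a₁, hshiftη a₂⟩, uniq, part_c⟩
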